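/- Under the same hypotheses (dω = 0, β = δ and ∂β = 0 at the point, J = ω as matrices at the point, J² = -1 identically), for any fixed index l and any vector v one has (∂_l J_j^m) v^j (ω v)_m = 0, i.e. the bilinear expression ⟨(∂_l J)v, ωv⟩ vanishes. -/

import Mathlib

open Matrix

/-- Partial derivative of a scalar field on `ℝ^N` in the `l`-th coordinate direction. -/
noncomputable def pder {N : ℕ} (l : Fin N) (f : (Fin N → ℝ) → ℝ) (x : Fin N → ℝ) : ℝ :=
  fderiv ℝ f x (Pi.single l 1)

section helpers

variable {N : ℕ} (l : Fin N) (x : Fin N → ℝ)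

lemma pder_const (c : ℝ) : pder l (fun _ => c) x = 0 := by
  simp [pder]

lemma pder_sum {ι : Type*} (s : Finset ι) (f : ι → (Fin N → ℝ) → ℝ)
    (h : ∀ i ∈ s, DifferentiableAt ℝ (f i) x) :
    pder l (fun y => ∑ i ∈ s, f i y) x = ∑ i ∈ s, pder l (f i) x := by
  simp only [pder, fderiv_fun_sum h, ContinuousLinearMap.sum_apply]

lemma pder_mul (f g : (Fin N → ℝ) → ℝ) (hf : DifferentiableAt ℝ f x)
    (hg : DifferentiableAt ℝ g x) :
    pder l (fun y => f y * g y) x = pder l f x * g x + f x * pder l g x := by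
  simp only [pder, fderiv_fun_mul hf hg, ContinuousLinearMap.add_apply,
    ContinuousLinearMap.smul_apply, smul_eq_mul]
  ring

lemma pder_neg (f : (Fin N → ℝ) → ℝ) :
    pder l (fun y => -f y) x = -pder l f x := by
  simp only [pder, fderiv_fun_neg, ContinuousLinearMap.neg_apply]

/-- Differentiability of the determinant of a matrix-valued function with
differentiable entries. -/
lemma diff_det {M : ℕ} {A : (Fin N → ℝ) → Matrix (Fin M) (Fin M) ℝ}
    (h : ∀ i j, Differentiable ℝ (fun x => A x i j)) :
    Differentiable ℝ (fun x => (A x).det) := by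
  have : (fun x => (A x).det)
      = fun x => ∑ σ : Equiv.Perm (Fin M), ((Equiv.Perm.sign σ : ℤ) : ℝ) * ∏ i, A x (σ i) i := by
    funext x; rw [Matrix.det_apply']
  rw [this]
  refine Differentiable.fun_sum fun σ _ => Differentiable.const_mul ?_ _
  intro x
  exact (HasFDerivAt.finset_prod
    (fun i (_ : i ∈ Finset.univ) => ((h (σ i) i) x).hasFDerivAt)).differentiableAt

end helpers

/-- For `J = ω β⁻¹` with `J² = -1`, at a point where `β = δ` and `∂β = 0`,
one has `(∂_l J_j^m) v^j (ωv)_m = 0` for every direction `l` and vector `v`. -/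
theorem stmt_4 (n : ℕ) (x₀ : Fin (2 * n) → ℝ)
    (om β J : (Fin (2 * n) → ℝ) → Matrix (Fin (2 * n)) (Fin (2 * n)) ℝ)
    (homdiff : ∀ i j, Differentiable ℝ (fun x => om x i j))
    (hβdiff : ∀ i j, Differentiable ℝ (fun x => β x i j))
    (hanti : ∀ x, (om x)ᵀ = -(om x))
    (hclosed : ∀ x (l j k : Fin (2 * n)),
      pder l (fun y => om y j k) x + pder j (fun y => om y k l) x
        + pder k (fun y => om y l j) x = 0)
    (hβpos : ∀ x, (β x).PosDef)
    (hβ0 : β x₀ = 1)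
    (hdβ : ∀ (l i j : Fin (2 * n)), pder l (fun y => β y i j) x₀ = 0)
    (hJ : ∀ x, J x = om x * (β x)⁻¹)
    (hJ2 : ∀ x, J x * J x = -1) :
    ∀ (l : Fin (2 * n)) (v : Fin (2 * n) → ℝ),
      ∑ j, ∑ m, pder l (fun y => J y j m) x₀ * v j * (∑ s, om x₀ m s * v s) = 0 := by
  intro l v
  have hdet0 : ∀ x, IsUnit (β x).det := fun x =>
    isUnit_iff_ne_zero.mpr (hβpos x).det_pos.ne'
  -- differentiability of the entries of β⁻¹
  have hdetdiff : Differentiable ℝ (fun x => (β x).det) := diff_det hβdiff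
  have hadjdiff : ∀ i j, Differentiable ℝ (fun x => (β x).adjugate i j) := by
    intro i j
    have : (fun x => (β x).adjugate i j)
        = fun x => ((β x).updateRow j (Pi.single i 1)).det := by
      funext x; rw [Matrix.adjugate_apply]
    rw [this]
    refine diff_det fun a b => ?_
    simp only [Matrix.updateRow_apply]
    by_cases hab : a = j
    · simp [hab]
    · simpa [hab] using hβdiff a b
  have hinvdiff : ∀ i j, Differentiable ℝ (fun x => (β x)⁻¹ i j) := by
    intro i j
    have : (fun x => (β x)⁻¹ i j)
        = fun x => ((β x).det)⁻¹ * (β x).adjugate i j := by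
      funext x
      rw [Matrix.inv_def, Matrix.smul_apply, Ring.inverse_eq_inv', smul_eq_mul]
    rw [this]
    exact (hdetdiff.inv fun x => (hβpos x).det_pos.ne').mul (hadjdiff i j)
  have hJdiff : ∀ i j, Differentiable ℝ (fun x => J x i j) := by
    intro i j
    have : (fun x => J x i j) = fun x => ∑ k, om x i k * (β x)⁻¹ k j := by
      funext x; rw [hJ x, Matrix.mul_apply]
    rw [this]
    exact Differentiable.fun_sum fun k _ => (homdiff i k).fun_mul (hinvdiff k j)
  -- J = ω at x₀
  have hJ0 : J x₀ = om x₀ := by rw [hJ, hβ0, inv_one, Matrix.mul_one]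
  -- ∂J = ∂ω at x₀
  have hEq1 : ∀ j m : Fin (2 * n),
      pder l (fun y => J y j m) x₀ = pder l (fun y => om y j m) x₀ := by
    intro j m
    have key : (fun y => om y j m) = fun y => ∑ k, J y j k * β y k m := by
      funext y
      have h1 : J y * β y = om y := by
        rw [hJ y]; exact Matrix.nonsing_inv_mul_cancel_right _ _ (hdet0 y)
      calc om y j m = (J y * β y) j m := by rw [h1]
        _ = ∑ k, J y j k * β y k m := Matrix.mul_apply
    have : pder l (fun y => om y j m) x₀
        = ∑ k, (pder l (fun y => J y j k) x₀ * β x₀ k m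
            + J x₀ j k * pder l (fun y => β y k m) x₀) := by
      rw [key, pder_sum _ _ _ _ (fun k _ =>
        ((hJdiff j k) x₀).fun_mul ((hβdiff k m) x₀))]
      exact Finset.sum_congr rfl fun k _ =>
        pder_mul _ _ _ _ ((hJdiff j k) x₀) ((hβdiff k m) x₀)
    rw [this]
    simp [hdβ, hβ0, Matrix.one_apply, mul_ite, Finset.sum_ite_eq]
  -- derivative of J² = -1
  have hEq2 : ∀ j m : Fin (2 * n),
      ∑ k, (pder l (fun y => om y j k) x₀ * om x₀ k m
        + om x₀ j k * pder l (fun y => om y k m) x₀) = 0 := by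
    intro j m
    have key : (fun y => ∑ k, J y j k * J y k m) = fun _ => (-1 : Matrix _ _ ℝ) j m := by
      funext y
      calc (∑ k, J y j k * J y k m) = (J y * J y) j m := (Matrix.mul_apply).symm
        _ = (-1 : Matrix _ _ ℝ) j m := by rw [hJ2 y]
    have h0 : pder l (fun y => ∑ k, J y j k * J y k m) x₀ = 0 := by
      rw [key, pder_const]
    rw [pder_sum _ _ _ _ (fun k _ => ((hJdiff j k) x₀).fun_mul ((hJdiff k m) x₀))] at h0
    rw [Finset.sum_congr rfl (fun k _ =>
      pder_mul _ _ _ _ ((hJdiff j k) x₀) ((hJdiff k m) x₀))] at h0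
    simpa only [hEq1, hJ0] using h0
  -- antisymmetry of ∂ω and ω at x₀
  have hWanti : ∀ j m : Fin (2 * n), om x₀ m j = -om x₀ j m := by
    intro j m
    have := congrFun (congrFun (hanti x₀) j) m
    simpa [Matrix.transpose_apply, Matrix.neg_apply] using this
  have hDanti : ∀ j m : Fin (2 * n),
      pder l (fun y => om y m j) x₀ = -pder l (fun y => om y j m) x₀ := by
    intro j m
    have key : (fun y => om y m j) = fun y => -om y j m := by
      funext y
      have := congrFun (congrFun (hanti y) j) m
      simpa [Matrix.transpose_apply, Matrix.neg_apply] using this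
    rw [key, pder_neg]
  -- notation
  set D : Matrix (Fin (2 * n)) (Fin (2 * n)) ℝ :=
    fun j m => pder l (fun y => om y j m) x₀ with hD
  set W : Matrix (Fin (2 * n)) (Fin (2 * n)) ℝ := om x₀ with hW
  -- goal rewrites to ∑ j, ∑ s, v j * (D*W) j s * v s
  have goal_eq : ∑ j, ∑ m, pder l (fun y => J y j m) x₀ * v j * (∑ s, om x₀ m s * v s)
      = ∑ j, ∑ s, v j * (∑ m, D j m * W m s) * v s := by
    simp only [hEq1, ← hD, ← hW, Finset.mul_sum, Finset.sum_mul]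
    rw [Finset.sum_congr rfl fun j _ => Finset.sum_comm]
    refine Finset.sum_congr rfl fun j _ => Finset.sum_congr rfl fun s _ =>
      Finset.sum_congr rfl fun m _ => by ring
  rw [goal_eq]
  -- A := D * W satisfies A j s + A s j = 0
  have hA : ∀ j s : Fin (2 * n), (∑ m, D j m * W m s) + (∑ m, D s m * W m j) = 0 := by
    intro j s
    have h2 := hEq2 j s
    have : (∑ m, D s m * W m j) = ∑ m, W j m * D m s := by
      refine Finset.sum_congr rfl fun m _ => ?_
      show pder l (fun y => om y s m) x₀ * W m j
          = W j m * pder l (fun y => om y m s) x₀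
      rw [hDanti m s, hWanti m j]
      ring
    rw [this]
    calc (∑ m, D j m * W m s) + ∑ m, W j m * D m s
        = ∑ m, (D j m * W m s + W j m * D m s) := by rw [Finset.sum_add_distrib]
      _ = 0 := h2
  -- antisymmetric quadratic form vanishes
  have hsym : ∑ j, ∑ s, v j * (∑ m, D j m * W m s) * v s
      = ∑ j, ∑ s, v j * (∑ m, D s m * W m j) * v s := by
    rw [Finset.sum_comm]
    refine Finset.sum_congr rfl fun j _ => Finset.sum_congr rfl fun s _ => by ring
  have h2E : (∑ j, ∑ s, v j * (∑ m, D j m * W m s) * v s)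
      + (∑ j, ∑ s, v j * (∑ m, D j m * W m s) * v s) = 0 := by
    nth_rewrite 2 [hsym]
    rw [← Finset.sum_add_distrib]
    refine Finset.sum_eq_zero fun j _ => ?_
    rw [← Finset.sum_add_distrib]
    refine Finset.sum_eq_zero fun s _ => ?_
    linear_combination (v j * v s) * hA j s
  linarith
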